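/- Let T > 0, C₁ > 0 and C̃ > 0. Let Z : [0,T] → ℝ be nonnegative and integrable, and let W : [0,T] → ℝ be absolutely continuous with 0 < W(t) ≤ C̃ for all t ∈ [0,T], satisfying the differential inequality W'(t) ≤ −C₁ Z(t) W(t) ln(W(t)/C̃) for almost every t ∈ [0,T]. Then W(t) ≤ C̃ · (W(0)/C̃)^{exp(−C₁ ∫₀ᵗ Z(s) ds)} for every t ∈ [0,T]. -/

import Mathlib

open MeasureTheory Set
open Filter Topology

lemma ftc_comp_aux
    (g : ℝ → ℝ × ℝ) (hg : Integrable g)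
    (A₀ : ℝ × ℝ) (F : ℝ × ℝ → ℝ) (F' : ℝ × ℝ → (ℝ × ℝ) →L[ℝ] ℝ)
    (hF : ∀ p, HasFDerivAt F (F' p) p) (hF' : Continuous F')
    (t : ℝ) (ht : 0 ≤ t) :
    F (A₀ + ∫ s in (0:ℝ)..t, g s) = F A₀ +
      ∫ s in Ioc (0:ℝ) t, F' (A₀ + ∫ u in (0:ℝ)..s, g u) (g s) := by
  set A : ℝ → ℝ × ℝ := fun r => A₀ + ∫ s in (0:ℝ)..r, g s with hAdef
  have hAcont : Continuous A := continuous_const.add (hg.continuous_primitive 0)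
  obtain ⟨R, hR⟩ : ∃ R, ∀ x ∈ Icc (0:ℝ) t, ‖A x‖ ≤ R :=
    isCompact_Icc.exists_bound_of_continuousOn hAcont.continuousOn
  have h0t : (0:ℝ) ∈ Icc (0:ℝ) t := ⟨le_refl _, ht⟩
  set K : Set (ℝ × ℝ) := Metric.closedBall 0 (R + 1) with hKdef
  have hK : IsCompact K := isCompact_closedBall _ _
  obtain ⟨M, hM⟩ : ∃ M, ∀ p ∈ K, ‖F' p‖ ≤ M :=
    hK.exists_bound_of_continuousOn hF'.continuousOn
  have hAK : ∀ x ∈ Icc (0:ℝ) t, A x ∈ K := fun x hx =>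
    mem_closedBall_zero_iff.2 ((hR x hx).trans (by linarith))
  have hM0 : 0 ≤ M := (norm_nonneg _).trans (hM _ (hAK 0 h0t))
  -- continuous approximations
  have approx : ∀ n : ℕ, ∃ h : ℝ → ℝ × ℝ, Continuous h ∧ Integrable h ∧
      (∫ x, ‖g x - h x‖) ≤ ((n:ℝ)+1)⁻¹ := by
    intro n
    obtain ⟨h, -, hle, hcont, hint⟩ := hg.exists_hasCompactSupport_integral_sub_le
      (by positivity : (0:ℝ) < ((n:ℝ)+1)⁻¹)
    exact ⟨h, hcont, hint, hle⟩
  choose G hGc hGi hGle using approx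
  set δ : ℕ → ℝ := fun n => ∫ x, ‖g x - G n x‖ with hδdef
  have hδ0 : ∀ n, 0 ≤ δ n := fun n => integral_nonneg fun x => norm_nonneg _
  have hδ1 : ∀ n, δ n ≤ 1 := fun n => (hGle n).trans (by
    rw [inv_le_one_iff₀]; right; push_cast; linarith [Nat.cast_nonneg (α := ℝ) n])
  have hδlim : Tendsto δ atTop (𝓝 0) := by
    refine squeeze_zero hδ0 (fun n => hGle n) ?_
    simpa [one_div] using tendsto_one_div_add_atTop_nhds_zero_nat (𝕜 := ℝ)
  set B : ℕ → ℝ → ℝ × ℝ := fun n r => A₀ + ∫ s in (0:ℝ)..r, G n s with hBdef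
  have hBderiv : ∀ n r, HasDerivAt (B n) (G n r) r := by
    intro n r
    exact (intervalIntegral.integral_hasDerivAt_right
      ((hGc n).intervalIntegrable _ _)
      ((hGc n).stronglyMeasurableAtFilter _ _) (hGc n).continuousAt).const_add A₀
  have hBcont : ∀ n, Continuous (B n) := fun n =>
    continuous_iff_continuousAt.2 fun r => (hBderiv n r).continuousAt
  -- distance between B n and A
  have hdist : ∀ n, ∀ x ∈ Icc (0:ℝ) t, ‖B n x - A x‖ ≤ δ n := by
    intro n x hx
    have hgi : IntervalIntegrable g volume 0 x := hg.intervalIntegrable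
    have hGni : IntervalIntegrable (G n) volume 0 x := (hGc n).intervalIntegrable _ _
    have hsub : B n x - A x = ∫ s in (0:ℝ)..x, (G n s - g s) := by
      rw [intervalIntegral.integral_sub hGni hgi]
      simp [hBdef, hAdef]
    rw [hsub]
    have h1 : ‖∫ s in (0:ℝ)..x, (G n s - g s)‖
        ≤ ∫ s in (0:ℝ)..x, ‖G n s - g s‖ :=
      intervalIntegral.norm_integral_le_abs_integral_norm.trans (by
        rw [abs_of_nonneg]
        exact intervalIntegral.integral_nonneg hx.1 fun s _ => norm_nonneg _)
    refine h1.trans ?_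
    rw [intervalIntegral.integral_of_le hx.1]
    have : ∫ s in Ioc (0:ℝ) x, ‖G n s - g s‖ ≤ ∫ s, ‖G n s - g s‖ :=
      setIntegral_le_integral ((hGi n).sub hg).norm
        (Eventually.of_forall fun s => norm_nonneg _)
    refine this.trans ?_
    rw [hδdef]
    simp only [norm_sub_rev (G n _)]
    exact le_refl _
  have hBK : ∀ n, ∀ x ∈ Icc (0:ℝ) t, B n x ∈ K := by
    intro n x hx
    have : ‖B n x‖ ≤ ‖A x‖ + ‖B n x - A x‖ := by
      simpa using norm_add_le (A x) (B n x - A x)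
    refine mem_closedBall_zero_iff.2 (this.trans ?_)
    have := (hdist n x hx).trans (hδ1 n)
    linarith [hR x hx]
  -- FTC for the approximations
  have hkey : ∀ n, F (B n t) = F A₀ + ∫ s in Ioc (0:ℝ) t, F' (B n s) (G n s) := by
    intro n
    have hBd : ∀ s, HasDerivAt (fun r => F (B n r)) (F' (B n s) (G n s)) s := fun s =>
      (hF (B n s)).comp_hasDerivAt s (hBderiv n s)
    have hcont : Continuous fun s => F' (B n s) (G n s) :=
      (hF'.comp (hBcont n)).clm_apply (hGc n)
    have := intervalIntegral.integral_eq_sub_of_hasDerivAt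
      (f := fun r => F (B n r)) (f' := fun s => F' (B n s) (G n s))
      (a := 0) (b := t) (fun s _ => hBd s) (hcont.intervalIntegrable _ _)
    rw [intervalIntegral.integral_of_le ht] at this
    have hB0 : F (B n 0) = F A₀ := by simp [hBdef]
    rw [this, hB0]
    ring
  -- limit of LHS
  have hBt : Tendsto (fun n => B n t) atTop (𝓝 (A t)) := by
    rw [tendsto_iff_norm_sub_tendsto_zero]
    exact squeeze_zero (fun n => norm_nonneg _)
      (fun n => hdist n t ⟨ht, le_refl t⟩) hδlim
  have hLHS : Tendsto (fun n => F (B n t)) atTop (𝓝 (F (A t))) :=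
    ((hF (A t)).continuousAt.tendsto).comp hBt
  -- limit of RHS
  have measAux : ∀ (ψ : ℝ → (ℝ × ℝ) →L[ℝ] ℝ), Continuous ψ → ∀ (φ : ℝ → ℝ × ℝ),
      AEStronglyMeasurable φ (volume.restrict (Ioc (0:ℝ) t)) →
      AEStronglyMeasurable (fun s => ψ s (φ s)) (volume.restrict (Ioc (0:ℝ) t)) := by
    intro ψ hψ φ hφ
    exact isBoundedBilinearMap_apply.continuous.comp_aestronglyMeasurable
      ((hψ.aestronglyMeasurable).prodMk hφ)
  have hgm : AEStronglyMeasurable g (volume.restrict (Ioc (0:ℝ) t)) :=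
    hg.aestronglyMeasurable.restrict
  have hmemae : ∀ᵐ s ∂(volume.restrict (Ioc (0:ℝ) t)), s ∈ Icc (0:ℝ) t := by
    filter_upwards [ae_restrict_mem measurableSet_Ioc] with s hs
    exact ⟨hs.1.le, hs.2⟩
  -- integrability of the dominated pieces
  have hint2 : ∀ n, IntegrableOn (fun s => F' (B n s) (g s)) (Ioc (0:ℝ) t) := by
    intro n
    refine Integrable.mono' (g := fun s => M * ‖g s‖)
      ((hg.norm.const_mul M).restrict) (measAux _ (hF'.comp (hBcont n)) _ hgm) ?_
    filter_upwards [hmemae] with s hs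
    calc ‖F' (B n s) (g s)‖ ≤ ‖F' (B n s)‖ * ‖g s‖ := (F' (B n s)).le_opNorm _
      _ ≤ M * ‖g s‖ := by
          exact mul_le_mul_of_nonneg_right (hM _ (hBK n s hs)) (norm_nonneg _)
  have hintA : IntegrableOn (fun s => F' (A s) (g s)) (Ioc (0:ℝ) t) := by
    refine Integrable.mono' (g := fun s => M * ‖g s‖)
      ((hg.norm.const_mul M).restrict) (measAux _ (hF'.comp hAcont) _ hgm) ?_
    filter_upwards [hmemae] with s hs
    calc ‖F' (A s) (g s)‖ ≤ ‖F' (A s)‖ * ‖g s‖ := (F' (A s)).le_opNorm _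
      _ ≤ M * ‖g s‖ := mul_le_mul_of_nonneg_right (hM _ (hAK s hs)) (norm_nonneg _)
  have hint1 : ∀ n, IntegrableOn (fun s => F' (B n s) (G n s - g s)) (Ioc (0:ℝ) t) := by
    intro n
    refine Integrable.mono' (g := fun s => M * ‖G n s - g s‖)
      ((((hGi n).sub hg).norm.const_mul M).restrict)
      (measAux _ (hF'.comp (hBcont n)) _ (((hGi n).sub hg).aestronglyMeasurable.restrict)) ?_
    filter_upwards [hmemae] with s hs
    calc ‖F' (B n s) (G n s - g s)‖ ≤ ‖F' (B n s)‖ * ‖G n s - g s‖ :=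
        (F' (B n s)).le_opNorm _
      _ ≤ M * ‖G n s - g s‖ :=
        mul_le_mul_of_nonneg_right (hM _ (hBK n s hs)) (norm_nonneg _)
  have hsplit : ∀ n, (∫ s in Ioc (0:ℝ) t, F' (B n s) (G n s))
      = (∫ s in Ioc (0:ℝ) t, F' (B n s) (G n s - g s))
        + ∫ s in Ioc (0:ℝ) t, F' (B n s) (g s) := by
    intro n
    rw [← integral_add (hint1 n) (hint2 n)]
    congr 1
    ext s
    rw [← map_add]
    congr 1
    abel
  have hterm1 : Tendsto (fun n => ∫ s in Ioc (0:ℝ) t, F' (B n s) (G n s - g s))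
      atTop (𝓝 0) := by
    apply squeeze_zero_norm (a := fun n => M * δ n)
    · intro n
      have hb : ∀ᵐ s ∂(volume.restrict (Ioc (0:ℝ) t)),
          ‖F' (B n s) (G n s - g s)‖ ≤ M * ‖G n s - g s‖ := by
        filter_upwards [hmemae] with s hs
        calc ‖F' (B n s) (G n s - g s)‖ ≤ ‖F' (B n s)‖ * ‖G n s - g s‖ :=
            (F' (B n s)).le_opNorm _
          _ ≤ M * ‖G n s - g s‖ :=
            mul_le_mul_of_nonneg_right (hM _ (hBK n s hs)) (norm_nonneg _)
      refine (norm_integral_le_of_norm_le ((((hGi n).sub hg).norm.const_mul M).restrict) hb).trans ?_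
      rw [integral_const_mul]
      refine mul_le_mul_of_nonneg_left ?_ hM0
      have : ∫ s in Ioc (0:ℝ) t, ‖G n s - g s‖ ≤ ∫ s, ‖G n s - g s‖ :=
        setIntegral_le_integral ((hGi n).sub hg).norm
          (Eventually.of_forall fun s => norm_nonneg _)
      refine this.trans ?_
      rw [hδdef]
      simp only [norm_sub_rev (G n _)]
      exact le_refl _
    · simpa using hδlim.const_mul M
  have hterm2 : Tendsto (fun n => ∫ s in Ioc (0:ℝ) t, F' (B n s) (g s)) atTop
      (𝓝 (∫ s in Ioc (0:ℝ) t, F' (A s) (g s))) := by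
    refine tendsto_integral_of_dominated_convergence (fun s => M * ‖g s‖)
      (fun n => measAux _ (hF'.comp (hBcont n)) _ hgm)
      ((hg.norm.const_mul M).restrict) ?_ ?_
    · intro n
      filter_upwards [hmemae] with s hs
      calc ‖F' (B n s) (g s)‖ ≤ ‖F' (B n s)‖ * ‖g s‖ := (F' (B n s)).le_opNorm _
        _ ≤ M * ‖g s‖ := mul_le_mul_of_nonneg_right (hM _ (hBK n s hs)) (norm_nonneg _)
    · filter_upwards [hmemae] with s hs
      have hBs : Tendsto (fun n => B n s) atTop (𝓝 (A s)) := by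
        rw [tendsto_iff_norm_sub_tendsto_zero]
        exact squeeze_zero (fun n => norm_nonneg _) (fun n => hdist n s hs) hδlim
      have hF's : Tendsto (fun n => F' (B n s)) atTop (𝓝 (F' (A s))) :=
        (hF'.continuousAt.tendsto).comp hBs
      exact ((ContinuousLinearMap.apply ℝ ℝ (g s)).continuous.tendsto _).comp hF's
  have hRHS : Tendsto (fun n => F (B n t)) atTop
      (𝓝 (F A₀ + ∫ s in Ioc (0:ℝ) t, F' (A s) (g s))) := by
    simp only [hkey, hsplit]
    have := (hterm1.add hterm2).const_add (F A₀)
    simpa [add_assoc] using this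
  have := tendsto_nhds_unique hLHS hRHS
  simpa [hAdef] using this


/-- Osgood-type (logarithmic Gronwall) estimate: if `0 < W ≤ C̃` is absolutely
continuous on `[0,T]` and `W' ≤ -C₁ Z W ln(W/C̃)` a.e. with `Z ≥ 0` integrable,
then `W(t) ≤ C̃ (W(0)/C̃)^{exp(-C₁ ∫₀ᵗ Z)}` (real power `Real.rpow`). -/
theorem osgood_logarithmic_gronwall
    (T C₁ Ctil : ℝ) (hT : 0 < T) (hC₁ : 0 < C₁) (hCtil : 0 < Ctil)
    (Z W W' : ℝ → ℝ)
    (hZ_nonneg : ∀ t ∈ Icc (0 : ℝ) T, 0 ≤ Z t)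
    (hZ_int : IntegrableOn Z (Icc 0 T))
    (hW'_int : IntegrableOn W' (Icc 0 T))
    (hderiv : ∀ᵐ t ∂(volume.restrict (Icc (0 : ℝ) T)), HasDerivAt W (W' t) t)
    (hFTC : ∀ t ∈ Icc (0 : ℝ) T, W t = W 0 + ∫ s in (0 : ℝ)..t, W' s)
    (hW_pos : ∀ t ∈ Icc (0 : ℝ) T, 0 < W t)
    (hW_le : ∀ t ∈ Icc (0 : ℝ) T, W t ≤ Ctil)
    (hineq : ∀ᵐ t ∂(volume.restrict (Icc (0 : ℝ) T)),
      W' t ≤ -C₁ * Z t * W t * Real.log (W t / Ctil)) :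
    ∀ t ∈ Icc (0 : ℝ) T,
      W t ≤ Ctil * (W 0 / Ctil) ^ Real.exp (-C₁ * ∫ s in (0 : ℝ)..t, Z s) := by
  have h0T : (0:ℝ) ∈ Icc (0:ℝ) T := ⟨le_refl _, hT.le⟩
  -- continuity of W on [0,T]
  have hWcont : ContinuousOn W (Icc (0:ℝ) T) := by
    have h1 : ContinuousOn (fun x => ∫ s in Ioc (0:ℝ) x, W' s) (Icc (0:ℝ) T) :=
      intervalIntegral.continuousOn_primitive hW'_int
    have h2 : ContinuousOn (fun x => W 0 + ∫ s in Ioc (0:ℝ) x, W' s) (Icc (0:ℝ) T) :=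
      continuousOn_const.add h1
    refine h2.congr ?_
    intro x hx
    rw [hFTC x hx, intervalIntegral.integral_of_le hx.1]
  -- positive lower bound m for W
  obtain ⟨t₀, ht₀, hmin⟩ := isCompact_Icc.exists_isMinOn ⟨0, h0T⟩ hWcont
  set m : ℝ := W t₀ with hmdef
  have hm0 : 0 < m := hW_pos t₀ ht₀
  have hmW : ∀ s ∈ Icc (0:ℝ) T, m ≤ W s := fun s hs => hmin hs
  set c : ℝ := m / 2 with hcdef
  have hc0 : 0 < c := by positivity
  have hcm : c < m := by simp [hcdef]; linarith
  have hcC : c ≤ Ctil := le_trans (le_of_lt (lt_of_lt_of_le hcm (hmW t₀ ht₀))) (hW_le t₀ ht₀)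
  -- the C¹ surrogate for log(·/Ctil)
  set h₀ : ℝ → ℝ := fun x => (max x c)⁻¹ with hh₀def
  have hh₀c : Continuous h₀ :=
    (continuous_id.max continuous_const).inv₀
      (fun x => ne_of_gt (lt_of_lt_of_le hc0 (le_max_right x c)))
  set ℓ : ℝ → ℝ := fun w => ∫ x in Ctil..w, h₀ x with hℓdef
  have hℓd : ∀ w, HasDerivAt ℓ (h₀ w) w := fun w =>
    intervalIntegral.integral_hasDerivAt_right (hh₀c.intervalIntegrable _ _)
      (hh₀c.stronglyMeasurableAtFilter _ _) hh₀c.continuousAt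
  have hℓcont : Continuous ℓ := continuous_iff_continuousAt.2 fun w => (hℓd w).continuousAt
  have hℓval : ∀ w, c ≤ w → ℓ w = Real.log (w / Ctil) := by
    intro w hw
    have hmin' : c ≤ min Ctil w := le_min hcC hw
    have hcongr : ∀ x ∈ uIcc Ctil w, h₀ x = x⁻¹ := by
      intro x hx
      have : c ≤ x := le_trans hmin' (by rw [uIcc] at hx; exact hx.1)
      simp [hh₀def, max_eq_left this]
    rw [hℓdef]
    simp only []
    rw [intervalIntegral.integral_congr hcongr, integral_inv]
    intro hx
    have := hx.1
    rw [min_def] at this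
    split_ifs at this <;> linarith
  -- the data for the abstract FTC lemma
  set g : ℝ → ℝ × ℝ :=
    (Icc (0:ℝ) T).indicator (fun s => (W' s, C₁ * Z s)) with hgdef
  have hpairint : IntegrableOn (fun s => (W' s, C₁ * Z s)) (Icc (0:ℝ) T) :=
    hW'_int.prodMk (hZ_int.const_mul C₁)
  have hgint : Integrable g :=
    (integrable_indicator_iff measurableSet_Icc).2 hpairint
  set A₀ : ℝ × ℝ := (W 0, 0) with hA₀def
  set F : ℝ × ℝ → ℝ := fun p => ℓ p.1 * Real.exp p.2 with hFdef
  set F' : ℝ × ℝ → (ℝ × ℝ) →L[ℝ] ℝ := fun p =>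
    ℓ p.1 • (Real.exp p.2 • ContinuousLinearMap.snd ℝ ℝ ℝ)
      + Real.exp p.2 • (h₀ p.1 • ContinuousLinearMap.fst ℝ ℝ ℝ) with hF'def
  have hF : ∀ p, HasFDerivAt F (F' p) p := by
    intro p
    have h1 : HasFDerivAt (fun q : ℝ × ℝ => ℓ q.1)
        (h₀ p.1 • ContinuousLinearMap.fst ℝ ℝ ℝ) p :=
      (hℓd p.1).comp_hasFDerivAt p hasFDerivAt_fst
    have h2 : HasFDerivAt (fun q : ℝ × ℝ => Real.exp q.2)
        (Real.exp p.2 • ContinuousLinearMap.snd ℝ ℝ ℝ) p :=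
      (Real.hasDerivAt_exp p.2).comp_hasFDerivAt p hasFDerivAt_snd
    exact h1.mul h2
  have hF'c : Continuous F' := by
    refine Continuous.add ?_ ?_
    · exact (hℓcont.comp continuous_fst).smul
        ((Real.continuous_exp.comp continuous_snd).smul continuous_const)
    · exact (Real.continuous_exp.comp continuous_snd).smul
        ((hh₀c.comp continuous_fst).smul continuous_const)
  intro t ht
  -- identification of A on [0,T]
  have hAeq : ∀ x ∈ Icc (0:ℝ) T,
      (A₀ + ∫ s in (0:ℝ)..x, g s) = (W x, C₁ * ∫ s in (0:ℝ)..x, Z s) := by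
    intro x hx
    have hsub : Icc (0:ℝ) x ⊆ Icc (0:ℝ) T := Icc_subset_Icc le_rfl hx.2
    have hgeq : ∀ s ∈ uIcc (0:ℝ) x, g s = (W' s, C₁ * Z s) := by
      intro s hs
      rw [uIcc_of_le hx.1] at hs
      exact indicator_of_mem (hsub hs) _
    have hii : IntervalIntegrable (fun s => (W' s, C₁ * Z s)) volume 0 x := by
      rw [intervalIntegrable_iff_integrableOn_Icc_of_le hx.1]
      exact hpairint.mono_set hsub
    have hiW : IntervalIntegrable W' volume 0 x := by
      rw [intervalIntegrable_iff_integrableOn_Icc_of_le hx.1]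
      exact hW'_int.mono_set hsub
    have hZ' : IntegrableOn (fun s => C₁ * Z s) (Icc (0:ℝ) T) := hZ_int.const_mul C₁
    have hiZ : IntervalIntegrable (fun s => C₁ * Z s) volume 0 x := by
      rw [intervalIntegrable_iff_integrableOn_Icc_of_le hx.1]
      exact hZ'.mono_set hsub
    rw [intervalIntegral.integral_congr hgeq]
    have hfst : (∫ s in (0:ℝ)..x, (W' s, C₁ * Z s)).1 = ∫ s in (0:ℝ)..x, W' s := by
      have := ContinuousLinearMap.intervalIntegral_comp_comm
        (ContinuousLinearMap.fst ℝ ℝ ℝ) hii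
      simpa using this.symm
    have hsnd : (∫ s in (0:ℝ)..x, (W' s, C₁ * Z s)).2 = ∫ s in (0:ℝ)..x, C₁ * Z s := by
      have := ContinuousLinearMap.intervalIntegral_comp_comm
        (ContinuousLinearMap.snd ℝ ℝ ℝ) hii
      simpa using this.symm
    have : A₀ + ∫ s in (0:ℝ)..x, (fun s => (W' s, C₁ * Z s)) s
        = (W 0 + ∫ s in (0:ℝ)..x, W' s, 0 + ∫ s in (0:ℝ)..x, C₁ * Z s) := by
      rw [Prod.ext_iff]
      constructor
      · simpa [hA₀def] using hfst
      · simpa [hA₀def] using hsnd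
    rw [this]
    rw [← hFTC x hx, zero_add, intervalIntegral.integral_const_mul]
  -- apply the abstract lemma
  have hmain := ftc_comp_aux g hgint A₀ F F' hF hF'c t ht.1
  rw [hAeq t ht] at hmain
  -- the integrand is a.e. nonpositive
  have hIoc_sub : Ioc (0:ℝ) t ⊆ Icc (0:ℝ) T := fun s hs => ⟨hs.1.le, hs.2.trans ht.2⟩
  have hae : ∀ᵐ s ∂(volume.restrict (Ioc (0:ℝ) t)),
      F' (A₀ + ∫ u in (0:ℝ)..s, g u) (g s) ≤ 0 := by
    have hineq' : ∀ᵐ s ∂(volume.restrict (Ioc (0:ℝ) t)),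
        W' s ≤ -C₁ * Z s * W s * Real.log (W s / Ctil) :=
      ae_restrict_of_ae_restrict_of_subset hIoc_sub hineq
    filter_upwards [hineq', ae_restrict_mem measurableSet_Ioc] with s hs hsmem
    have hsT : s ∈ Icc (0:ℝ) T := hIoc_sub hsmem
    rw [hAeq s hsT]
    have hgs : g s = (W' s, C₁ * Z s) := indicator_of_mem hsT _
    rw [hgs]
    have hWs : 0 < W s := hW_pos s hsT
    have hcW : c ≤ W s := le_trans hcm.le (hmW s hsT)
    have happ : F' ((W s, C₁ * ∫ u in (0:ℝ)..s, Z u)) ((W' s, C₁ * Z s))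
        = Real.exp (C₁ * ∫ u in (0:ℝ)..s, Z u) *
            (Real.log (W s / Ctil) * (C₁ * Z s) + (W s)⁻¹ * W' s) := by
      simp only [hF'def, ContinuousLinearMap.add_apply, ContinuousLinearMap.smul_apply,
        ContinuousLinearMap.coe_fst', ContinuousLinearMap.coe_snd', smul_eq_mul]
      rw [hℓval _ hcW]
      have : h₀ (W s) = (W s)⁻¹ := by simp [hh₀def, max_eq_left hcW]
      rw [this]
      ring
    rw [happ]
    have h1 : (W s)⁻¹ * W' s ≤ (W s)⁻¹ * (-C₁ * Z s * W s * Real.log (W s / Ctil)) :=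
      mul_le_mul_of_nonneg_left hs (inv_nonneg.2 hWs.le)
    have h2 : (W s)⁻¹ * (-C₁ * Z s * W s * Real.log (W s / Ctil))
        = -(Real.log (W s / Ctil) * (C₁ * Z s)) := by
      field_simp
    refine mul_nonpos_of_nonneg_of_nonpos (Real.exp_nonneg _) ?_
    rw [h2] at h1
    linarith
  -- conclude the integral inequality
  have hFA0 : F A₀ = Real.log (W 0 / Ctil) := by
    simp [hFdef, hA₀def, hℓval _ (le_trans hcm.le (hmW 0 h0T))]
  have hineq2 : Real.log (W t / Ctil) * Real.exp (C₁ * ∫ s in (0:ℝ)..t, Z s)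
      ≤ Real.log (W 0 / Ctil) := by
    have h3 : (∫ s in Ioc (0:ℝ) t, F' (A₀ + ∫ u in (0:ℝ)..s, g u) (g s)) ≤ 0 :=
      integral_nonpos_of_ae hae
    have hFAt : F ((W t, C₁ * ∫ s in (0:ℝ)..t, Z s))
        = Real.log (W t / Ctil) * Real.exp (C₁ * ∫ s in (0:ℝ)..t, Z s) := by
      simp [hFdef, hℓval _ (le_trans hcm.le (hmW t ht))]
    rw [hFAt, hFA0] at hmain
    linarith
  -- final algebra
  have hWt : 0 < W t := hW_pos t ht
  have hdiv : 0 < W 0 / Ctil := div_pos (hW_pos 0 h0T) hCtil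
  have hexp : (0:ℝ) < Real.exp (C₁ * ∫ s in (0:ℝ)..t, Z s) := Real.exp_pos _
  have hlog : Real.log (W t / Ctil)
      ≤ Real.log (W 0 / Ctil) * Real.exp (-C₁ * ∫ s in (0:ℝ)..t, Z s) := by
    rw [neg_mul, Real.exp_neg, ← div_eq_mul_inv, le_div_iff₀ hexp]
    exact hineq2
  calc W t = Ctil * (W t / Ctil) := by field_simp
    _ = Ctil * Real.exp (Real.log (W t / Ctil)) := by
        rw [Real.exp_log (div_pos hWt hCtil)]
    _ ≤ Ctil * Real.exp (Real.log (W 0 / Ctil) * Real.exp (-C₁ * ∫ s in (0:ℝ)..t, Z s)) := by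
        exact mul_le_mul_of_nonneg_left (Real.exp_le_exp.2 hlog) hCtil.le
    _ = Ctil * (W 0 / Ctil) ^ Real.exp (-C₁ * ∫ s in (0:ℝ)..t, Z s) := by
        rw [Real.rpow_def_of_pos hdiv]
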